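/- Let C be a monoidal category and let A and B be separable monoid objects in C, i.e. the multiplication μ_A : A ⊗ A ⟶ A admits a section s_A : A ⟶ A ⊗ A (s_A ≫ μ_A = id_A) which is a morphism of A–A-bimodules, meaning μ_A ≫ s_A = (id_A ⊗ s_A) ≫ (μ_A ⊗ id_A) = (s_A ⊗ id_A) ≫ (id_A ⊗ μ_A) with the necessary associators inserted, and similarly μ_B admits a bimodule section s_B. Then every A–B-bimodule object P in C is a bimodule retract of the free bimodule on its underlying object: there exists a morphism σ : P ⟶ A ⊗ P ⊗ B which is a section of the action morphism A ⊗ P ⊗ B ⟶ P (apply the right B-action then the left A-action) and which is a morphism of A–B-bimodules, where A ⊗ P ⊗ B carries the left A-action μ_A ⊗ id_P ⊗ id_B and the right B-action id_A ⊗ id_P ⊗ μ_B (with associators inserted). -/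

import Mathlib

open CategoryTheory MonoidalCategory

section SepAux

variable {C : Type*} [Category C] [MonoidalCategory C]
    {A B : Mon C}
    (sA : A.X ⟶ A.X ⊗ A.X)
    (sB : B.X ⟶ B.X ⊗ B.X)
    (P : Bimod A B)

/-- Auxiliary section of the left action built from a section of `μ_A`. -/
def sepσA : P.X ⟶ A.X ⊗ P.X :=
  (λ_ P.X).inv ≫ (A.mon.one ▷ P.X) ≫ (sA ▷ P.X) ≫ (α_ A.X A.X P.X).hom ≫ (A.X ◁ P.actLeft)

/-- Auxiliary section of the right action built from a section of `μ_B`. -/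
def sepσB : P.X ⟶ P.X ⊗ B.X :=
  (ρ_ P.X).inv ≫ (P.X ◁ B.mon.one) ≫ (P.X ◁ sB) ≫ (α_ P.X B.X B.X).inv ≫ (P.actRight ▷ B.X)

theorem sep_secA (hsA : sA ≫ A.mon.mul = 𝟙 A.X) : sepσA sA P ≫ P.actLeft = 𝟙 P.X := by
  unfold sepσA
  slice_lhs 4 6 => rw [← P.left_assoc]
  slice_lhs 3 4 => rw [← comp_whiskerRight, hsA, id_whiskerRight]
  simp

theorem sep_secB (hsB : sB ≫ B.mon.mul = 𝟙 B.X) : sepσB sB P ≫ P.actRight = 𝟙 P.X := by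
  unfold sepσB
  slice_lhs 4 6 => rw [← P.right_assoc]
  slice_lhs 3 4 => rw [← MonoidalCategory.whiskerLeft_comp, hsB, MonoidalCategory.whiskerLeft_id]
  simp

theorem sep_leftA_lhs
    (hsA_left : A.mon.mul ≫ sA = (A.X ◁ sA) ≫ (α_ A.X A.X A.X).inv ≫ (A.mon.mul ▷ A.X)) :
    (A.X ◁ sepσA sA P) ≫ (α_ A.X A.X P.X).inv ≫ (A.mon.mul ▷ P.X) =
      (sA ▷ P.X) ≫ (α_ A.X A.X P.X).hom ≫ (A.X ◁ P.actLeft) := by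
  unfold sepσA
  calc (A.X ◁ ((λ_ P.X).inv ≫ (A.mon.one ▷ P.X) ≫ (sA ▷ P.X) ≫ (α_ A.X A.X P.X).hom ≫
          (A.X ◁ P.actLeft))) ≫ (α_ A.X A.X P.X).inv ≫ (A.mon.mul ▷ P.X)
      = (A.X ◁ (λ_ P.X).inv) ≫ (A.X ◁ (A.mon.one ▷ P.X)) ≫ (A.X ◁ (sA ▷ P.X)) ≫
          (A.X ◁ (α_ A.X A.X P.X).hom) ≫ (α_ A.X A.X (A.X ⊗ P.X)).inv ≫
          ((A.X ⊗ A.X) ◁ P.actLeft) ≫ (A.mon.mul ▷ P.X) := by monoidal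
    _ = (A.X ◁ (λ_ P.X).inv) ≫ (A.X ◁ (A.mon.one ▷ P.X)) ≫ (A.X ◁ (sA ▷ P.X)) ≫
          (A.X ◁ (α_ A.X A.X P.X).hom) ≫ (α_ A.X A.X (A.X ⊗ P.X)).inv ≫
          (A.mon.mul ▷ (A.X ⊗ P.X)) ≫ (A.X ◁ P.actLeft) := by rw [whisker_exchange]
    _ = (A.X ◁ (λ_ P.X).inv) ≫ (A.X ◁ (A.mon.one ▷ P.X)) ≫ (α_ A.X A.X P.X).inv ≫
          (((A.X ◁ sA) ≫ (α_ A.X A.X A.X).inv ≫ (A.mon.mul ▷ A.X)) ▷ P.X) ≫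
          (α_ A.X A.X P.X).hom ≫ (A.X ◁ P.actLeft) := by monoidal
    _ = (A.X ◁ (λ_ P.X).inv) ≫ (A.X ◁ (A.mon.one ▷ P.X)) ≫ (α_ A.X A.X P.X).inv ≫
          ((A.mon.mul ≫ sA) ▷ P.X) ≫
          (α_ A.X A.X P.X).hom ≫ (A.X ◁ P.actLeft) := by rw [← hsA_left]
    _ = (A.X ◁ (λ_ P.X).inv) ≫ (α_ A.X (𝟙_ C) P.X).inv ≫
          ((((A.X ◁ A.mon.one) ≫ A.mon.mul) ≫ sA) ▷ P.X) ≫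
          (α_ A.X A.X P.X).hom ≫ (A.X ◁ P.actLeft) := by monoidal
    _ = (A.X ◁ (λ_ P.X).inv) ≫ (α_ A.X (𝟙_ C) P.X).inv ≫ (((ρ_ A.X).hom ≫ sA) ▷ P.X) ≫
          (α_ A.X A.X P.X).hom ≫ (A.X ◁ P.actLeft) := by rw [MonObj.mul_one]
    _ = (sA ▷ P.X) ≫ (α_ A.X A.X P.X).hom ≫ (A.X ◁ P.actLeft) := by monoidal

theorem sep_leftA_rhs
    (hsA_right : A.mon.mul ≫ sA = (sA ▷ A.X) ≫ (α_ A.X A.X A.X).hom ≫ (A.X ◁ A.mon.mul)) :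
    P.actLeft ≫ sepσA sA P = (sA ▷ P.X) ≫ (α_ A.X A.X P.X).hom ≫ (A.X ◁ P.actLeft) := by
  unfold sepσA
  calc P.actLeft ≫ ((λ_ P.X).inv ≫ (A.mon.one ▷ P.X) ≫ (sA ▷ P.X) ≫ (α_ A.X A.X P.X).hom ≫
          (A.X ◁ P.actLeft))
      = (λ_ (A.X ⊗ P.X)).inv ≫ ((𝟙_ C) ◁ P.actLeft) ≫ (A.mon.one ▷ P.X) ≫ (sA ▷ P.X) ≫
          (α_ A.X A.X P.X).hom ≫ (A.X ◁ P.actLeft) := by monoidal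
    _ = (λ_ (A.X ⊗ P.X)).inv ≫ (A.mon.one ▷ (A.X ⊗ P.X)) ≫ (A.X ◁ P.actLeft) ≫ (sA ▷ P.X) ≫
          (α_ A.X A.X P.X).hom ≫ (A.X ◁ P.actLeft) := by rw [whisker_exchange_assoc]
    _ = (λ_ (A.X ⊗ P.X)).inv ≫ (A.mon.one ▷ (A.X ⊗ P.X)) ≫ (sA ▷ (A.X ⊗ P.X)) ≫
          ((A.X ⊗ A.X) ◁ P.actLeft) ≫
          (α_ A.X A.X P.X).hom ≫ (A.X ◁ P.actLeft) := by rw [whisker_exchange_assoc]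
    _ = (λ_ (A.X ⊗ P.X)).inv ≫ (A.mon.one ▷ (A.X ⊗ P.X)) ≫ (sA ▷ (A.X ⊗ P.X)) ≫
          (α_ A.X A.X (A.X ⊗ P.X)).hom ≫
          (A.X ◁ ((A.X ◁ P.actLeft) ≫ P.actLeft)) := by monoidal
    _ = (λ_ (A.X ⊗ P.X)).inv ≫ (A.mon.one ▷ (A.X ⊗ P.X)) ≫ (sA ▷ (A.X ⊗ P.X)) ≫
          (α_ A.X A.X (A.X ⊗ P.X)).hom ≫
          (A.X ◁ ((α_ A.X A.X P.X).inv ≫ (A.mon.mul ▷ P.X) ≫ P.actLeft)) := by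
            rw [show (A.X ◁ P.actLeft) ≫ P.actLeft =
              (α_ A.X A.X P.X).inv ≫ (A.mon.mul ▷ P.X) ≫ P.actLeft by
                rw [P.left_assoc]; simp]
    _ = (λ_ (A.X ⊗ P.X)).inv ≫ (α_ (𝟙_ C) A.X P.X).inv ≫ ((A.mon.one ▷ A.X) ▷ P.X) ≫
          (((sA ▷ A.X) ≫ (α_ A.X A.X A.X).hom ≫ (A.X ◁ A.mon.mul)) ▷ P.X) ≫
          (α_ A.X A.X P.X).hom ≫ (A.X ◁ P.actLeft) := by monoidal
    _ = (λ_ (A.X ⊗ P.X)).inv ≫ (α_ (𝟙_ C) A.X P.X).inv ≫ ((A.mon.one ▷ A.X) ▷ P.X) ≫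
          ((A.mon.mul ≫ sA) ▷ P.X) ≫
          (α_ A.X A.X P.X).hom ≫ (A.X ◁ P.actLeft) := by rw [← hsA_right]
    _ = (λ_ (A.X ⊗ P.X)).inv ≫ (α_ (𝟙_ C) A.X P.X).inv ≫
          ((((A.mon.one ▷ A.X) ≫ A.mon.mul) ≫ sA) ▷ P.X) ≫
          (α_ A.X A.X P.X).hom ≫ (A.X ◁ P.actLeft) := by monoidal
    _ = (λ_ (A.X ⊗ P.X)).inv ≫ (α_ (𝟙_ C) A.X P.X).inv ≫
          (((λ_ A.X).hom ≫ sA) ▷ P.X) ≫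
          (α_ A.X A.X P.X).hom ≫ (A.X ◁ P.actLeft) := by rw [MonObj.one_mul]
    _ = (sA ▷ P.X) ≫ (α_ A.X A.X P.X).hom ≫ (A.X ◁ P.actLeft) := by monoidal

theorem sep_rightB_lhs
    (hsB_right : B.mon.mul ≫ sB = (sB ▷ B.X) ≫ (α_ B.X B.X B.X).hom ≫ (B.X ◁ B.mon.mul)) :
    (sepσB sB P ▷ B.X) ≫ (α_ P.X B.X B.X).hom ≫ (P.X ◁ B.mon.mul) =
      (P.X ◁ sB) ≫ (α_ P.X B.X B.X).inv ≫ (P.actRight ▷ B.X) := by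
  unfold sepσB
  calc (((ρ_ P.X).inv ≫ (P.X ◁ B.mon.one) ≫ (P.X ◁ sB) ≫ (α_ P.X B.X B.X).inv ≫
          (P.actRight ▷ B.X)) ▷ B.X) ≫ (α_ P.X B.X B.X).hom ≫ (P.X ◁ B.mon.mul)
      = ((ρ_ P.X).inv ▷ B.X) ≫ ((P.X ◁ B.mon.one) ▷ B.X) ≫ ((P.X ◁ sB) ▷ B.X) ≫
          ((α_ P.X B.X B.X).inv ▷ B.X) ≫ (α_ (P.X ⊗ B.X) B.X B.X).hom ≫
          (P.actRight ▷ (B.X ⊗ B.X)) ≫ (P.X ◁ B.mon.mul) := by monoidal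
    _ = ((ρ_ P.X).inv ▷ B.X) ≫ ((P.X ◁ B.mon.one) ▷ B.X) ≫ ((P.X ◁ sB) ▷ B.X) ≫
          ((α_ P.X B.X B.X).inv ▷ B.X) ≫ (α_ (P.X ⊗ B.X) B.X B.X).hom ≫
          ((P.X ⊗ B.X) ◁ B.mon.mul) ≫ (P.actRight ▷ B.X) := by rw [← whisker_exchange]
    _ = ((ρ_ P.X).inv ▷ B.X) ≫ ((P.X ◁ B.mon.one) ▷ B.X) ≫ (α_ P.X B.X B.X).hom ≫
          (P.X ◁ ((sB ▷ B.X) ≫ (α_ B.X B.X B.X).hom ≫ (B.X ◁ B.mon.mul))) ≫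
          (α_ P.X B.X B.X).inv ≫ (P.actRight ▷ B.X) := by monoidal
    _ = ((ρ_ P.X).inv ▷ B.X) ≫ ((P.X ◁ B.mon.one) ▷ B.X) ≫ (α_ P.X B.X B.X).hom ≫
          (P.X ◁ (B.mon.mul ≫ sB)) ≫
          (α_ P.X B.X B.X).inv ≫ (P.actRight ▷ B.X) := by rw [← hsB_right]
    _ = ((ρ_ P.X).inv ▷ B.X) ≫ (α_ P.X (𝟙_ C) B.X).hom ≫
          (P.X ◁ (((B.mon.one ▷ B.X) ≫ B.mon.mul) ≫ sB)) ≫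
          (α_ P.X B.X B.X).inv ≫ (P.actRight ▷ B.X) := by monoidal
    _ = ((ρ_ P.X).inv ▷ B.X) ≫ (α_ P.X (𝟙_ C) B.X).hom ≫ (P.X ◁ ((λ_ B.X).hom ≫ sB)) ≫
          (α_ P.X B.X B.X).inv ≫ (P.actRight ▷ B.X) := by rw [MonObj.one_mul]
    _ = (P.X ◁ sB) ≫ (α_ P.X B.X B.X).inv ≫ (P.actRight ▷ B.X) := by monoidal

theorem sep_rightB_rhs
    (hsB_left : B.mon.mul ≫ sB = (B.X ◁ sB) ≫ (α_ B.X B.X B.X).inv ≫ (B.mon.mul ▷ B.X)) :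
    P.actRight ≫ sepσB sB P = (P.X ◁ sB) ≫ (α_ P.X B.X B.X).inv ≫ (P.actRight ▷ B.X) := by
  unfold sepσB
  calc P.actRight ≫ ((ρ_ P.X).inv ≫ (P.X ◁ B.mon.one) ≫ (P.X ◁ sB) ≫ (α_ P.X B.X B.X).inv ≫
          (P.actRight ▷ B.X))
      = (ρ_ (P.X ⊗ B.X)).inv ≫ (P.actRight ▷ (𝟙_ C)) ≫ (P.X ◁ B.mon.one) ≫ (P.X ◁ sB) ≫
          (α_ P.X B.X B.X).inv ≫ (P.actRight ▷ B.X) := by monoidal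
    _ = (ρ_ (P.X ⊗ B.X)).inv ≫ ((P.X ⊗ B.X) ◁ B.mon.one) ≫ (P.actRight ▷ B.X) ≫ (P.X ◁ sB) ≫
          (α_ P.X B.X B.X).inv ≫ (P.actRight ▷ B.X) := by rw [← whisker_exchange_assoc]
    _ = (ρ_ (P.X ⊗ B.X)).inv ≫ ((P.X ⊗ B.X) ◁ B.mon.one) ≫ ((P.X ⊗ B.X) ◁ sB) ≫
          (P.actRight ▷ (B.X ⊗ B.X)) ≫
          (α_ P.X B.X B.X).inv ≫ (P.actRight ▷ B.X) := by rw [← whisker_exchange_assoc]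
    _ = (ρ_ (P.X ⊗ B.X)).inv ≫ ((P.X ⊗ B.X) ◁ B.mon.one) ≫ ((P.X ⊗ B.X) ◁ sB) ≫
          (α_ (P.X ⊗ B.X) B.X B.X).inv ≫
          (((P.actRight ▷ B.X) ≫ P.actRight) ▷ B.X) := by monoidal
    _ = (ρ_ (P.X ⊗ B.X)).inv ≫ ((P.X ⊗ B.X) ◁ B.mon.one) ≫ ((P.X ⊗ B.X) ◁ sB) ≫
          (α_ (P.X ⊗ B.X) B.X B.X).inv ≫
          (((α_ P.X B.X B.X).hom ≫ (P.X ◁ B.mon.mul) ≫ P.actRight) ▷ B.X) := by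
            rw [show (P.actRight ▷ B.X) ≫ P.actRight =
              (α_ P.X B.X B.X).hom ≫ (P.X ◁ B.mon.mul) ≫ P.actRight by
                rw [P.right_assoc]; simp]
    _ = (ρ_ (P.X ⊗ B.X)).inv ≫ (α_ P.X B.X (𝟙_ C)).hom ≫ (P.X ◁ (B.X ◁ B.mon.one)) ≫
          (P.X ◁ ((B.X ◁ sB) ≫ (α_ B.X B.X B.X).inv ≫ (B.mon.mul ▷ B.X))) ≫
          (α_ P.X B.X B.X).inv ≫ (P.actRight ▷ B.X) := by monoidal
    _ = (ρ_ (P.X ⊗ B.X)).inv ≫ (α_ P.X B.X (𝟙_ C)).hom ≫ (P.X ◁ (B.X ◁ B.mon.one)) ≫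
          (P.X ◁ (B.mon.mul ≫ sB)) ≫
          (α_ P.X B.X B.X).inv ≫ (P.actRight ▷ B.X) := by rw [← hsB_left]
    _ = (ρ_ (P.X ⊗ B.X)).inv ≫ (α_ P.X B.X (𝟙_ C)).hom ≫
          (P.X ◁ (((B.X ◁ B.mon.one) ≫ B.mon.mul) ≫ sB)) ≫
          (α_ P.X B.X B.X).inv ≫ (P.actRight ▷ B.X) := by monoidal
    _ = (ρ_ (P.X ⊗ B.X)).inv ≫ (α_ P.X B.X (𝟙_ C)).hom ≫
          (P.X ◁ ((ρ_ B.X).hom ≫ sB)) ≫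
          (α_ P.X B.X B.X).inv ≫ (P.actRight ▷ B.X) := by rw [MonObj.mul_one]
    _ = (P.X ◁ sB) ≫ (α_ P.X B.X B.X).inv ≫ (P.actRight ▷ B.X) := by monoidal

theorem sep_rightA :
    (sepσA sA P ▷ B.X) ≫ (α_ A.X P.X B.X).hom ≫ (A.X ◁ P.actRight) =
      P.actRight ≫ sepσA sA P := by
  have h1 : (sepσA sA P ▷ B.X) ≫ (α_ A.X P.X B.X).hom ≫ (A.X ◁ P.actRight) =
      (λ_ (P.X ⊗ B.X)).inv ≫ (A.mon.one ▷ (P.X ⊗ B.X)) ≫ (sA ▷ (P.X ⊗ B.X)) ≫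
        ((A.X ⊗ A.X) ◁ P.actRight) ≫ (α_ A.X A.X P.X).hom ≫ (A.X ◁ P.actLeft) := by
    unfold sepσA
    calc ((λ_ P.X).inv ≫ (A.mon.one ▷ P.X) ≫ (sA ▷ P.X) ≫ (α_ A.X A.X P.X).hom ≫
            (A.X ◁ P.actLeft)) ▷ B.X ≫ (α_ A.X P.X B.X).hom ≫ (A.X ◁ P.actRight)
        = ((λ_ P.X).inv ▷ B.X) ≫ ((A.mon.one ▷ P.X) ▷ B.X) ≫ ((sA ▷ P.X) ▷ B.X) ≫
            ((α_ A.X A.X P.X).hom ▷ B.X) ≫ (α_ A.X (A.X ⊗ P.X) B.X).hom ≫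
            (A.X ◁ ((P.actLeft ▷ B.X) ≫ P.actRight)) := by monoidal
      _ = ((λ_ P.X).inv ▷ B.X) ≫ ((A.mon.one ▷ P.X) ▷ B.X) ≫ ((sA ▷ P.X) ▷ B.X) ≫
            ((α_ A.X A.X P.X).hom ▷ B.X) ≫ (α_ A.X (A.X ⊗ P.X) B.X).hom ≫
            (A.X ◁ ((α_ A.X P.X B.X).hom ≫ (A.X ◁ P.actRight) ≫ P.actLeft)) := by
              rw [P.middle_assoc]
      _ = (λ_ (P.X ⊗ B.X)).inv ≫ (A.mon.one ▷ (P.X ⊗ B.X)) ≫ (sA ▷ (P.X ⊗ B.X)) ≫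
            ((A.X ⊗ A.X) ◁ P.actRight) ≫ (α_ A.X A.X P.X).hom ≫ (A.X ◁ P.actLeft) := by
              monoidal
  have h2 : P.actRight ≫ sepσA sA P =
      (λ_ (P.X ⊗ B.X)).inv ≫ (A.mon.one ▷ (P.X ⊗ B.X)) ≫ (sA ▷ (P.X ⊗ B.X)) ≫
        ((A.X ⊗ A.X) ◁ P.actRight) ≫ (α_ A.X A.X P.X).hom ≫ (A.X ◁ P.actLeft) := by
    unfold sepσA
    calc P.actRight ≫ ((λ_ P.X).inv ≫ (A.mon.one ▷ P.X) ≫ (sA ▷ P.X) ≫ (α_ A.X A.X P.X).hom ≫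
            (A.X ◁ P.actLeft))
        = (λ_ (P.X ⊗ B.X)).inv ≫ ((𝟙_ C) ◁ P.actRight) ≫ (A.mon.one ▷ P.X) ≫ (sA ▷ P.X) ≫
            (α_ A.X A.X P.X).hom ≫ (A.X ◁ P.actLeft) := by monoidal
      _ = (λ_ (P.X ⊗ B.X)).inv ≫ (A.mon.one ▷ (P.X ⊗ B.X)) ≫ (A.X ◁ P.actRight) ≫ (sA ▷ P.X) ≫
            (α_ A.X A.X P.X).hom ≫ (A.X ◁ P.actLeft) := by rw [whisker_exchange_assoc]
      _ = (λ_ (P.X ⊗ B.X)).inv ≫ (A.mon.one ▷ (P.X ⊗ B.X)) ≫ (sA ▷ (P.X ⊗ B.X)) ≫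
            ((A.X ⊗ A.X) ◁ P.actRight) ≫
            (α_ A.X A.X P.X).hom ≫ (A.X ◁ P.actLeft) := by rw [whisker_exchange_assoc]
  rw [h1, h2]

end SepAux

/-- If `A` and `B` are separable monoid objects in a monoidal category `C` (the
multiplications admit bimodule sections `s_A`, `s_B`), then every `A`–`B`-bimodule object `P`
is a bimodule retract of the free bimodule `A ⊗ P ⊗ B`: there is a section `σ` of the action
morphism `A ⊗ P ⊗ B ⟶ P` which is a morphism of `A`–`B`-bimodules. -/
theorem bimod_retract_of_separable {C : Type*} [Category C] [MonoidalCategory C]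
    {A B : Mon C}
    (sA : A.X ⟶ A.X ⊗ A.X)
    (hsA : sA ≫ A.mon.mul = 𝟙 A.X)
    (hsA_left : A.mon.mul ≫ sA = (A.X ◁ sA) ≫ (α_ A.X A.X A.X).inv ≫ (A.mon.mul ▷ A.X))
    (hsA_right : A.mon.mul ≫ sA = (sA ▷ A.X) ≫ (α_ A.X A.X A.X).hom ≫ (A.X ◁ A.mon.mul))
    (sB : B.X ⟶ B.X ⊗ B.X)
    (hsB : sB ≫ B.mon.mul = 𝟙 B.X)
    (hsB_left : B.mon.mul ≫ sB = (B.X ◁ sB) ≫ (α_ B.X B.X B.X).inv ≫ (B.mon.mul ▷ B.X))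
    (hsB_right : B.mon.mul ≫ sB = (sB ▷ B.X) ≫ (α_ B.X B.X B.X).hom ≫ (B.X ◁ B.mon.mul))
    (P : Bimod A B) :
    ∃ σ : P.X ⟶ A.X ⊗ P.X ⊗ B.X,
      -- `σ` is a section of the action morphism (right `B`-action then left `A`-action)
      σ ≫ (A.X ◁ P.actRight) ≫ P.actLeft = 𝟙 P.X ∧
      -- `σ` is compatible with the left `A`-actions
      (A.X ◁ σ) ≫ (α_ A.X A.X (P.X ⊗ B.X)).inv ≫ (A.mon.mul ▷ (P.X ⊗ B.X)) =
        P.actLeft ≫ σ ∧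
      -- `σ` is compatible with the right `B`-actions
      (σ ▷ B.X) ≫ (α_ A.X (P.X ⊗ B.X) B.X).hom ≫ (A.X ◁ (α_ P.X B.X B.X).hom) ≫
          (A.X ◁ (P.X ◁ B.mon.mul)) =
        P.actRight ≫ σ := by
  have hA : (A.X ◁ sepσA sA P) ≫ (α_ A.X A.X P.X).inv ≫ (A.mon.mul ▷ P.X) =
      P.actLeft ≫ sepσA sA P :=
    (sep_leftA_lhs sA P hsA_left).trans (sep_leftA_rhs sA P hsA_right).symm
  have hB : (sepσB sB P ▷ B.X) ≫ (α_ P.X B.X B.X).hom ≫ (P.X ◁ B.mon.mul) =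
      P.actRight ≫ sepσB sB P :=
    (sep_rightB_lhs sB P hsB_right).trans (sep_rightB_rhs sB P hsB_left).symm
  refine ⟨sepσA sA P ≫ (A.X ◁ sepσB sB P), ?_, ?_, ?_⟩
  · slice_lhs 2 3 => rw [← MonoidalCategory.whiskerLeft_comp, sep_secB sB P hsB,
      MonoidalCategory.whiskerLeft_id]
    simp [sep_secA sA P hsA]
  · calc (A.X ◁ (sepσA sA P ≫ (A.X ◁ sepσB sB P))) ≫ (α_ A.X A.X (P.X ⊗ B.X)).inv ≫
          (A.mon.mul ▷ (P.X ⊗ B.X))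
        = (A.X ◁ sepσA sA P) ≫ (α_ A.X A.X P.X).inv ≫ ((A.X ⊗ A.X) ◁ sepσB sB P) ≫
            (A.mon.mul ▷ (P.X ⊗ B.X)) := by monoidal
      _ = (A.X ◁ sepσA sA P) ≫ (α_ A.X A.X P.X).inv ≫ (A.mon.mul ▷ P.X) ≫
            (A.X ◁ sepσB sB P) := by rw [whisker_exchange]
      _ = P.actLeft ≫ sepσA sA P ≫ (A.X ◁ sepσB sB P) := by
            rw [reassoc_of% hA]
  · calc ((sepσA sA P ≫ (A.X ◁ sepσB sB P)) ▷ B.X) ≫ (α_ A.X (P.X ⊗ B.X) B.X).hom ≫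
          (A.X ◁ (α_ P.X B.X B.X).hom) ≫ (A.X ◁ (P.X ◁ B.mon.mul))
        = (sepσA sA P ▷ B.X) ≫ (α_ A.X P.X B.X).hom ≫
            (A.X ◁ ((sepσB sB P ▷ B.X) ≫ (α_ P.X B.X B.X).hom ≫ (P.X ◁ B.mon.mul))) := by
              monoidal
      _ = (sepσA sA P ▷ B.X) ≫ (α_ A.X P.X B.X).hom ≫
            (A.X ◁ (P.actRight ≫ sepσB sB P)) := by rw [hB]
      _ = (sepσA sA P ▷ B.X) ≫ (α_ A.X P.X B.X).hom ≫ (A.X ◁ P.actRight) ≫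
            (A.X ◁ sepσB sB P) := by simp
      _ = P.actRight ≫ sepσA sA P ≫ (A.X ◁ sepσB sB P) := by
            rw [reassoc_of% (sep_rightA sA P)]
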